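/- The fixed-point operator Φ preserves the majorant property (Lemma 3.2): with notation as in the N-body problem, let 𝒜 be the set of power series ρ = 1 + Σ_{k≥1} ρ_k t^k ∈ ℝ₊[[t]] such that q_i − q_j ⊴ ‖q_i⁰ − q_j⁰‖·ρ for all 1 ≤ i < j ≤ N, where (q, v) is the formal power series solution of the N-body equations with regular initial data (q⁰, v⁰). Define Φ(ρ) = 1 + μ(q⁰,v⁰)·t + ν(q⁰)·∫∫ ρ·(2 − ρ²)^{−3/2}. Then Φ maps 𝒜 into 𝒜. -/

import Mathlib

open scoped RealInnerProductSpace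
open Finset

noncomputable section

/-- `p = g^ν` formally: `p₀ = 1` and the recurrence coming from `p'·g = ν·p·g'`. -/
def IsFPow (g p : ℕ → ℝ) (ν : ℝ) : Prop :=
  p 0 = 1 ∧ ∀ k : ℕ, 1 ≤ k →
    p k = (1 / (k : ℝ)) *
      ∑ j ∈ Finset.range k, ((((k - j : ℕ) : ℝ)) * ν - (j : ℝ)) * g (k - j) * p j

/-- Cauchy product of two scalar power series (coefficientwise). -/
def cauchy (a b : ℕ → ℝ) (k : ℕ) : ℝ := ∑ j ∈ Finset.range (k + 1), a j * b (k - j)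

/-- `K_i(q⁰) = Σ_{j≠i} G m_j / ‖q_i⁰ − q_j⁰‖²`. -/
def Kcoef {N : ℕ} (G : ℝ) (m : Fin N → ℝ) (q0 : Fin N → EuclideanSpace ℝ (Fin 3))
    (i : Fin N) : ℝ :=
  ∑ j ∈ Finset.univ.erase i, G * m j / ‖q0 i - q0 j‖ ^ 2

lemma pow_maj (g h p P : ℕ → ℝ)
    (hp : IsFPow g p (-(3/2))) (hP : IsFPow h P (-(3/2)))
    (hd : ∀ k, 1 ≤ k → |g k| ≤ -h k) (k : ℕ) :
    |p k| ≤ P k ∧ 0 ≤ P k := by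
  induction k using Nat.strong_induction_on with
  | _ k ih =>
    rcases Nat.eq_zero_or_pos k with rfl | hk
    · simp [hp.1, hP.1]
    · have hpk := hp.2 k hk
      have hPk := hP.2 k hk
      have hterm : ∀ j ∈ Finset.range k,
          |((((k - j : ℕ) : ℝ)) * (-(3/2)) - (j:ℝ)) * g (k - j) * p j|
            ≤ ((((k - j : ℕ) : ℝ)) * (-(3/2)) - (j:ℝ)) * h (k - j) * P j := by
        intro j hj
        have hjk : j < k := Finset.mem_range.mp hj
        have h1 : 1 ≤ k - j := by omega
        have hcast : (1:ℝ) ≤ ((k - j : ℕ) : ℝ) := by exact_mod_cast h1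
        have hjnn : (0:ℝ) ≤ (j:ℝ) := Nat.cast_nonneg j
        set c : ℝ := (((k - j : ℕ) : ℝ)) * (-(3/2)) - (j:ℝ) with hc
        have hcneg : c ≤ 0 := by rw [hc]; nlinarith
        have hgd := hd (k - j) h1
        obtain ⟨hpj, hPj⟩ := ih j hjk
        have e1 : |c * g (k-j) * p j| = |c| * |g (k-j)| * |p j| := by
          rw [abs_mul, abs_mul]
        rw [e1, abs_of_nonpos hcneg]
        have h2 : (-c) * |g (k-j)| * |p j| ≤ (-c) * (-h (k-j)) * P j := by
          have h0g : 0 ≤ |g (k-j)| := abs_nonneg _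
          have h0p : 0 ≤ |p j| := abs_nonneg _
          have hcn : 0 ≤ -c := by linarith
          have s1 : |g (k-j)| * |p j| ≤ (-h (k-j)) * P j :=
            mul_le_mul hgd hpj h0p (le_trans h0g hgd)
          calc (-c) * |g (k-j)| * |p j| = (-c) * (|g (k-j)| * |p j|) := by ring
            _ ≤ (-c) * ((-h (k-j)) * P j) := mul_le_mul_of_nonneg_left s1 hcn
            _ = (-c) * (-h (k-j)) * P j := by ring
        nlinarith
      have hkpos : (0:ℝ) < (k:ℝ) := by exact_mod_cast hk
      constructor
      · rw [hpk, hPk, abs_mul, abs_of_nonneg (by positivity : (0:ℝ) ≤ 1/(k:ℝ))]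
        apply mul_le_mul_of_nonneg_left _ (by positivity)
        calc |∑ j ∈ Finset.range k, ((((k - j : ℕ) : ℝ)) * (-(3/2)) - (j:ℝ)) * g (k - j) * p j|
            ≤ ∑ j ∈ Finset.range k, |((((k - j : ℕ) : ℝ)) * (-(3/2)) - (j:ℝ)) * g (k - j) * p j| :=
              Finset.abs_sum_le_sum_abs _ _
          _ ≤ ∑ j ∈ Finset.range k, ((((k - j : ℕ) : ℝ)) * (-(3/2)) - (j:ℝ)) * h (k - j) * P j :=
              Finset.sum_le_sum hterm
      · rw [hPk]
        apply mul_nonneg (by positivity)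
        exact Finset.sum_nonneg fun j hj => le_trans (abs_nonneg _) (hterm j hj)

/-- The operator `Φ(ρ) = 1 + μ(q⁰,v⁰) t + ν(q⁰) ∫∫ ρ (2 − ρ²)^{−3/2}` maps the set `𝒜`
of majorants of the normalized differences of the N-body solution into itself
(Lemma 3.2): if `ρ ∈ 𝒜` (i.e. `q_i − q_j ⊴ ‖q_i⁰ − q_j⁰‖ ρ` for all `i < j`), then
`φ = Φ(ρ)` satisfies `q_i − q_j ⊴ ‖q_i⁰ − q_j⁰‖ φ` for all `i < j`. Here `μ0 = μ(q⁰,v⁰)`,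
`ν0 = ν(q⁰)` are the maxima over pairs, `P = (2 − ρ²)^{−3/2}`, and the coefficients of
`φ` are `φ_0 = 1`, `φ_1 = μ0`, `φ_{k+2} = ν0 (ρ·P)_k / ((k+2)(k+1))`. -/
theorem Phi_maps_A_to_A {N : ℕ} (G : ℝ) (m : Fin N → ℝ)
    (q v gser : Fin N → ℕ → EuclideanSpace ℝ (Fin 3))
    (w : Fin N → Fin N → ℕ → ℝ) (ρ P φ : ℕ → ℝ) (μ0 ν0 : ℝ)
    (hG : 0 < G) (hm : ∀ j, 0 < m j)
    (hsep : ∀ i j : Fin N, i ≠ j → q i 0 ≠ q j 0)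
    -- `w i j = (‖q_i − q_j‖²/‖q_i⁰ − q_j⁰‖²)^{−3/2}` as a formal power series
    (hw : ∀ i j : Fin N, i ≠ j →
      IsFPow (fun k =>
        (∑ a ∈ Finset.range (k + 1),
          ⟪q i a - q j a, q i (k - a) - q j (k - a)⟫) / ‖q i 0 - q j 0‖ ^ 2)
        (w i j) (-(3 / 2)))
    -- `gser i` is the coefficient series of `g_i(q)`
    (hgser : ∀ i k, gser i k =
      ∑ j ∈ Finset.univ.erase i, (G * m j / ‖q i 0 - q j 0‖ ^ 3) •
        (∑ a ∈ Finset.range (k + 1), w i j a • (q j (k - a) - q i (k - a))))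
    -- `(q, v)` is the formal power series solution of the N-body equations
    (hODEq : ∀ i, ∀ k : ℕ, ((k : ℝ) + 1) • q i (k + 1 : ℕ) = v i k)
    (hODEv : ∀ i, ∀ k : ℕ, ((k : ℝ) + 1) • v i (k + 1 : ℕ) = gser i k)
    -- `μ0 = max_{i<j} ‖v_i⁰ − v_j⁰‖/‖q_i⁰ − q_j⁰‖`
    (hμ0ub : ∀ i j : Fin N, i < j → ‖v i 0 - v j 0‖ / ‖q i 0 - q j 0‖ ≤ μ0)
    (hμ0mem : ∃ i j : Fin N, i < j ∧ μ0 = ‖v i 0 - v j 0‖ / ‖q i 0 - q j 0‖)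
    -- `ν0 = max_{i<j} (K_i(q⁰)+K_j(q⁰))/‖q_i⁰ − q_j⁰‖`
    (hν0ub : ∀ i j : Fin N, i < j →
      (Kcoef G m (fun l => q l 0) i + Kcoef G m (fun l => q l 0) j) / ‖q i 0 - q j 0‖ ≤ ν0)
    (hν0mem : ∃ i j : Fin N, i < j ∧
      ν0 = (Kcoef G m (fun l => q l 0) i + Kcoef G m (fun l => q l 0) j) / ‖q i 0 - q j 0‖)
    -- `ρ ∈ 𝒜`
    (hρ0 : ρ 0 = 1) (hρpos : ∀ k, 0 ≤ ρ k)
    (hρmaj : ∀ i j : Fin N, i < j → ∀ k, ‖q i k - q j k‖ ≤ ‖q i 0 - q j 0‖ * ρ k)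
    -- `P = (2 − ρ²)^{−3/2}` as a formal power series
    (hP : IsFPow (fun k => if k = 0 then 1 else -(cauchy ρ ρ k)) P (-(3 / 2)))
    -- `φ = Φ(ρ)`
    (hφ0 : φ 0 = 1) (hφ1 : φ 1 = μ0)
    (hφ : ∀ k : ℕ, φ (k + 2 : ℕ) = ν0 * cauchy ρ P k / (((k : ℝ) + 2) * ((k : ℝ) + 1))) :
    (∀ k, 0 ≤ φ k) ∧
      ∀ i j : Fin N, i < j → ∀ k, ‖q i k - q j k‖ ≤ ‖q i 0 - q j 0‖ * φ k := by

  classical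
  -- positivity of initial separations
  have hr : ∀ i j : Fin N, i ≠ j → (0:ℝ) < ‖q i 0 - q j 0‖ := fun i j hij =>
    norm_pos_iff.mpr (sub_ne_zero.mpr (hsep i j hij))
  -- symmetric version of the majorant hypothesis
  have hq : ∀ i j : Fin N, i ≠ j → ∀ k, ‖q i k - q j k‖ ≤ ‖q i 0 - q j 0‖ * ρ k := by
    intro i j hij k
    rcases lt_or_gt_of_ne hij with h | h
    · exact hρmaj i j h k
    · rw [norm_sub_rev (q i k), norm_sub_rev (q i 0)]
      exact hρmaj j i h k
  -- domination hypothesis for P against itself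
  have hPdom : ∀ k, 1 ≤ k →
      |(fun k => if k = 0 then 1 else -(cauchy ρ ρ k)) k|
        ≤ -((fun k => if k = 0 then 1 else -(cauchy ρ ρ k)) k) := by
    intro k hk
    have hk0 : k ≠ 0 := by omega
    simp only [if_neg hk0]
    have hc : 0 ≤ cauchy ρ ρ k :=
      Finset.sum_nonneg fun a _ => mul_nonneg (hρpos a) (hρpos _)
    rw [abs_neg, abs_of_nonneg hc, neg_neg]
  have hPnn : ∀ k, 0 ≤ P k := fun k => (pow_maj _ _ _ _ hP hP hPdom k).2
  -- w is dominated by P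
  have hwP : ∀ i j : Fin N, i ≠ j → ∀ a, |w i j a| ≤ P a := by
    intro i j hij a
    refine (pow_maj _ _ (w i j) P (hw i j hij) hP ?_ a).1
    intro k hk
    have hk0 : k ≠ 0 := by omega
    simp only [if_neg hk0, neg_neg]
    have hr2 : (0:ℝ) < ‖q i 0 - q j 0‖ ^ 2 := by
      have := hr i j hij; positivity
    rw [abs_div, abs_of_nonneg hr2.le, div_le_iff₀ hr2]
    have hCS : ∀ a ∈ Finset.range (k+1),
        |⟪q i a - q j a, q i (k - a) - q j (k - a)⟫|
          ≤ (‖q i 0 - q j 0‖ * ρ a) * (‖q i 0 - q j 0‖ * ρ (k - a)) := by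
      intro a _
      refine le_trans (abs_real_inner_le_norm _ _) ?_
      exact mul_le_mul (hq i j hij a) (hq i j hij (k - a)) (norm_nonneg _)
        (le_trans (norm_nonneg _) (hq i j hij a))
    calc |∑ a ∈ Finset.range (k + 1),
            ⟪q i a - q j a, q i (k - a) - q j (k - a)⟫|
        ≤ ∑ a ∈ Finset.range (k + 1),
            |⟪q i a - q j a, q i (k - a) - q j (k - a)⟫| :=
          Finset.abs_sum_le_sum_abs _ _
      _ ≤ ∑ a ∈ Finset.range (k + 1),
            (‖q i 0 - q j 0‖ * ρ a) * (‖q i 0 - q j 0‖ * ρ (k - a)) :=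
          Finset.sum_le_sum hCS
      _ = ∑ a ∈ Finset.range (k + 1), ρ a * ρ (k - a) * ‖q i 0 - q j 0‖ ^ 2 := by
          refine Finset.sum_congr rfl fun a _ => by ring
      _ = cauchy ρ ρ k * ‖q i 0 - q j 0‖ ^ 2 := by rw [cauchy, Finset.sum_mul]
  -- Cauchy product symmetry
  have hcsym : ∀ k, ∑ a ∈ Finset.range (k+1), P a * ρ (k - a) = cauchy ρ P k := by
    intro k
    have hrefl := Finset.sum_range_reflect (fun a => ρ a * P (k - a)) (k+1)
    rw [cauchy, ← hrefl]
    refine Finset.sum_congr rfl fun a ha => ?_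
    have hak : a < k + 1 := Finset.mem_range.mp ha
    have e1 : k + 1 - 1 - a = k - a := by omega
    have e2 : k - (k - a) = a := by omega
    rw [e1, e2, mul_comm]
  have hcnn : ∀ k, 0 ≤ cauchy ρ P k :=
    fun k => Finset.sum_nonneg fun a _ => mul_nonneg (hρpos a) (hPnn _)
  -- bound on each gser i
  have hK : ∀ i : Fin N, ∀ k, ‖gser i k‖ ≤ Kcoef G m (fun l => q l 0) i * cauchy ρ P k := by
    intro i k
    rw [hgser i k, Kcoef, Finset.sum_mul]
    refine le_trans (norm_sum_le _ _) (Finset.sum_le_sum ?_)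
    intro j hj
    have hji : j ≠ i := Finset.ne_of_mem_erase hj
    have hij : i ≠ j := hji.symm
    have hrij := hr i j hij
    have hcoef : (0:ℝ) ≤ G * m j / ‖q i 0 - q j 0‖ ^ 3 := by
      have := (hm j).le; positivity
    rw [norm_smul, Real.norm_eq_abs, abs_of_nonneg hcoef]
    have hsumb : ‖∑ a ∈ Finset.range (k + 1), w i j a • (q j (k - a) - q i (k - a))‖
        ≤ ‖q i 0 - q j 0‖ * cauchy ρ P k := by
      refine le_trans (norm_sum_le _ _) ?_
      have hterm : ∀ a ∈ Finset.range (k+1),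
          ‖w i j a • (q j (k - a) - q i (k - a))‖
            ≤ ‖q i 0 - q j 0‖ * (P a * ρ (k - a)) := by
        intro a _
        rw [norm_smul, Real.norm_eq_abs]
        have hb : ‖q j (k - a) - q i (k - a)‖ ≤ ‖q i 0 - q j 0‖ * ρ (k - a) := by
          rw [norm_sub_rev]
          exact hq i j hij (k - a)
        calc |w i j a| * ‖q j (k - a) - q i (k - a)‖
            ≤ P a * (‖q i 0 - q j 0‖ * ρ (k - a)) :=
              mul_le_mul (hwP i j hij a) hb (norm_nonneg _)
                (le_trans (abs_nonneg _) (hwP i j hij a))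
          _ = ‖q i 0 - q j 0‖ * (P a * ρ (k - a)) := by ring
      refine le_trans (Finset.sum_le_sum hterm) ?_
      rw [← Finset.mul_sum, hcsym k]
    calc G * m j / ‖q i 0 - q j 0‖ ^ 3 *
          ‖∑ a ∈ Finset.range (k + 1), w i j a • (q j (k - a) - q i (k - a))‖
        ≤ G * m j / ‖q i 0 - q j 0‖ ^ 3 * (‖q i 0 - q j 0‖ * cauchy ρ P k) :=
          mul_le_mul_of_nonneg_left hsumb hcoef
      _ = G * m j / ‖q i 0 - q j 0‖ ^ 2 * cauchy ρ P k := by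
          field_simp
  -- nonnegativity of μ0, ν0, φ
  have hμnn : 0 ≤ μ0 := by
    obtain ⟨i, j, _, he⟩ := hμ0mem
    rw [he]; positivity
  have hKnn : ∀ i : Fin N, 0 ≤ Kcoef G m (fun l => q l 0) i := by
    intro i
    refine Finset.sum_nonneg fun j _ => ?_
    have := (hm j).le
    positivity
  have hνnn : 0 ≤ ν0 := by
    obtain ⟨i, j, _, he⟩ := hν0mem
    rw [he]
    exact div_nonneg (add_nonneg (hKnn i) (hKnn j)) (norm_nonneg _)
  have hφnn : ∀ k, 0 ≤ φ k := by
    intro k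
    match k with
    | 0 => rw [hφ0]; norm_num
    | 1 => rw [hφ1]; exact hμnn
    | (k+2) =>
      rw [hφ k]
      have h1 : (0:ℝ) < ((k:ℝ) + 2) * ((k:ℝ) + 1) := by positivity
      exact div_nonneg (mul_nonneg hνnn (hcnn k)) h1.le
  refine ⟨hφnn, ?_⟩
  intro i j hij k
  have hijne : i ≠ j := ne_of_lt hij
  have hrij := hr i j hijne
  match k with
  | 0 => rw [hφ0, mul_one]
  | 1 =>
    have h1 := hODEq i 0
    have h2 := hODEq j 0
    norm_num at h1 h2
    rw [hφ1, h1, h2]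
    have := hμ0ub i j hij
    rw [div_le_iff₀ hrij] at this
    linarith [this, mul_comm μ0 ‖q i 0 - q j 0‖]
  | (k+2) =>
    have hD : (0:ℝ) < ((k:ℝ) + 2) * ((k:ℝ) + 1) := by positivity
    have key : (((k:ℝ) + 2) * ((k:ℝ) + 1)) • (q i (k+2) - q j (k+2))
        = gser i k - gser j k := by
      have q1 := hODEq i (k+1); have q2 := hODEq j (k+1)
      have v1 := hODEv i k; have v2 := hODEv j k
      push_cast at q1 q2
      have e1 : (((k:ℝ) + 2) * ((k:ℝ) + 1)) • q i (k+2) = gser i k := by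
        rw [mul_comm, ← smul_smul]
        rw [show ((k:ℝ) + 1 + 1) = (k:ℝ) + 2 from by ring] at q1
        rw [q1, v1]
      have e2 : (((k:ℝ) + 2) * ((k:ℝ) + 1)) • q j (k+2) = gser j k := by
        rw [mul_comm, ← smul_smul]
        rw [show ((k:ℝ) + 1 + 1) = (k:ℝ) + 2 from by ring] at q2
        rw [q2, v2]
      rw [smul_sub, e1, e2]
    have hnorm : (((k:ℝ) + 2) * ((k:ℝ) + 1)) * ‖q i (k+2) - q j (k+2)‖
        = ‖gser i k - gser j k‖ := by
      rw [← key, norm_smul, Real.norm_eq_abs, abs_of_pos hD]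
    have hgb : ‖gser i k - gser j k‖ ≤ ν0 * ‖q i 0 - q j 0‖ * cauchy ρ P k := by
      have hb1 := hK i k
      have hb2 := hK j k
      have hsum : Kcoef G m (fun l => q l 0) i + Kcoef G m (fun l => q l 0) j
          ≤ ν0 * ‖q i 0 - q j 0‖ := by
        have := hν0ub i j hij
        rw [div_le_iff₀ hrij] at this
        linarith
      calc ‖gser i k - gser j k‖ ≤ ‖gser i k‖ + ‖gser j k‖ := norm_sub_le _ _
        _ ≤ (Kcoef G m (fun l => q l 0) i + Kcoef G m (fun l => q l 0) j)
              * cauchy ρ P k := by nlinarith [hcnn k]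
        _ ≤ ν0 * ‖q i 0 - q j 0‖ * cauchy ρ P k :=
            mul_le_mul_of_nonneg_right hsum (hcnn k)
    rw [hφ k]
    rw [← mul_le_mul_iff_right₀ hD]
    have erhs : (((k:ℝ) + 2) * ((k:ℝ) + 1)) *
        (‖q i 0 - q j 0‖ * (ν0 * cauchy ρ P k / (((k:ℝ) + 2) * ((k:ℝ) + 1))))
        = ν0 * ‖q i 0 - q j 0‖ * cauchy ρ P k := by
      field_simp
    rw [erhs, hnorm]
    exact hgb

end
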